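/- For the differentiation operator on entire functions there is no exponential norm estimate between sup-norms on discs: there do not exist m ∈ ℕ and λ > 0 such that for every entire function f : ℂ → ℂ and every k ∈ ℕ one has sup_{|z| ≤ 1} |f^{(k)}(z)| ≤ λ^k · sup_{|z| ≤ m} |f(z)|. -/

import Mathlib

open Filter Topology Set

/-- There do not exist `m ∈ ℕ` and `λ > 0` such that every
entire function `f` satisfies
`sup_{|z| ≤ 1} |f^{(k)}(z)| ≤ λ^k · sup_{|z| ≤ m} |f(z)|` for all `k`. -/
theorem stmt14 :
    ¬ ∃ (m : ℕ) (lam : ℝ), 0 < lam ∧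
        ∀ f : ℂ → ℂ, Differentiable ℂ f → ∀ k : ℕ,
          (⨆ z : Metric.closedBall (0 : ℂ) 1, ‖iteratedDeriv k f z‖) ≤
            lam ^ k * ⨆ z : Metric.closedBall (0 : ℂ) (m : ℝ), ‖f z‖ := by
  rintro ⟨m, lam, hlam, H⟩
  set c : ℝ := lam + 1 with hc
  have hc1 : 1 < c := by linarith
  have hc0 : 0 < c := by linarith
  set f : ℂ → ℂ := fun z => Complex.exp ((c : ℂ) * z) with hf
  have hdf : Differentiable ℂ f := Complex.differentiable_exp.comp ((differentiable_const _).mul differentiable_id)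
  -- choose k with (c/lam)^k > exp (c * m)
  obtain ⟨k, hk⟩ := pow_unbounded_of_one_lt (Real.exp (c * m)) (by
    rw [lt_div_iff₀ hlam]; linarith : 1 < c / lam)
  have key := H f hdf k
  -- RHS bound: sup ≤ exp (c*m)
  haveI : Nonempty (Metric.closedBall (0 : ℂ) (m : ℝ)) := ⟨⟨0, by simp⟩⟩
  have hRHS : (⨆ z : Metric.closedBall (0 : ℂ) (m : ℝ), ‖f z‖) ≤ Real.exp (c * m) := by
    apply ciSup_le
    rintro ⟨z, hz⟩
    simp only [hf, Complex.norm_exp]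
    apply Real.exp_le_exp.2
    have : ((c : ℂ) * z).re = c * z.re := by simp
    rw [this]
    have hzre : z.re ≤ (m : ℝ) := le_trans (Complex.re_le_norm z) (by
      simpa [Complex.dist_eq] using hz)
    exact mul_le_mul_of_nonneg_left hzre hc0.le
  -- LHS bound: sup ≥ c^k (value at 0)
  have hLHS : (c : ℝ) ^ k ≤ ⨆ z : Metric.closedBall (0 : ℂ) 1, ‖iteratedDeriv k f z‖ := by
    have h0 : (0 : ℂ) ∈ Metric.closedBall (0 : ℂ) 1 := by simp
    have hbdd : BddAbove (Set.range fun z : Metric.closedBall (0 : ℂ) 1 => ‖iteratedDeriv k f z‖) := by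
      have hcont : ContinuousOn (fun z => ‖iteratedDeriv k f z‖)
          (Metric.closedBall (0 : ℂ) 1) :=
        by
          rw [hf, iteratedDeriv_cexp_const_mul]
          fun_prop
      obtain ⟨C, hC⟩ := (isCompact_closedBall (0 : ℂ) 1).exists_bound_of_continuousOn hcont
      exact ⟨C, by rintro x ⟨⟨z, hz⟩, rfl⟩; simpa using hC z hz⟩
    have := le_ciSup hbdd (⟨0, h0⟩ : Metric.closedBall (0 : ℂ) 1)
    refine le_trans (le_of_eq ?_) this
    simp [hf, iteratedDeriv_cexp_const_mul, map_pow, abs_of_pos hc0]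
  have hchain : (c : ℝ) ^ k ≤ lam ^ k * Real.exp (c * m) :=
    le_trans hLHS (le_trans key (mul_le_mul_of_nonneg_left hRHS (by positivity)))
  have : lam ^ k * Real.exp (c * m) < c ^ k := by
    rw [div_pow, lt_div_iff₀ (by positivity)] at hk
    linarith [hk]
  linarith
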